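/- Let Λ be a full rank lattice in ℝ^n with basis F. For every ε > 0 there exist δ > 0 and ε' > 0 such that Λ* + B(0,ε') ⊆ F^{*,δ} ⊆ Λ* + B(0,ε), where B(0,r) is the open ball of radius r. -/

import Mathlib

def dualSet {n : ℕ} (S : Set (EuclideanSpace ℝ (Fin n))) : Set (EuclideanSpace ℝ (Fin n)) :=
  {x | ∀ g ∈ S, ∃ k : ℤ, (inner ℝ x g : ℝ) = (k : ℝ)}

def approxDual {n : ℕ} (S : Set (EuclideanSpace ℝ (Fin n))) (ε : ℝ) :
    Set (EuclideanSpace ℝ (Fin n)) :=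
  {x | ∀ g ∈ S, ∃ k : ℤ, |(inner ℝ x g : ℝ) - (k : ℝ)| ≤ ε}

/-- the `δ`-approximate dual of a basis `F` of a full rank lattice `Λ`
is squeezed between neighbourhoods of the dual lattice `Λ*`. -/
theorem stmt3 {n : ℕ} (Λ : AddSubgroup (EuclideanSpace ℝ (Fin n)))
    (b : Module.Basis (Fin n) ℝ (EuclideanSpace ℝ (Fin n)))
    (hb : Λ = AddSubgroup.closure (Set.range b)) :
    ∀ ε > 0, ∃ δ > 0, ∃ ε' > 0,
      (⋃ x ∈ dualSet (Λ : Set _), Metric.ball x ε') ⊆ approxDual (Set.range b) δ ∧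
      approxDual (Set.range b) δ ⊆ ⋃ x ∈ dualSet (Λ : Set _), Metric.ball x ε := by
  classical
  intro ε hε
  set E := EuclideanSpace ℝ (Fin n) with hE
  let d : Fin n → E := fun i =>
    (InnerProductSpace.toDual ℝ E).symm (LinearMap.toContinuousLinearMap (b.coord i))
  have hd : ∀ i (x : E), (inner ℝ (d i) x : ℝ) = b.coord i x := by
    intro i x
    simp [d, InnerProductSpace.toDual_symm_apply]
  have hdb : ∀ i j, (inner ℝ (d i) (b j) : ℝ) = if j = i then 1 else 0 := by
    intro i j
    rw [hd]
    simp [Module.Basis.coord_apply, Finsupp.single_apply]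
  have hinj : ∀ z : E, (∀ i, (inner ℝ z (b i) : ℝ) = 0) → z = 0 := by
    intro z hz
    have h2 : ∀ w ∈ Submodule.span ℝ (Set.range b), (inner ℝ z w : ℝ) = 0 := by
      intro w hw
      induction hw using Submodule.span_induction with
      | mem w hw => obtain ⟨i, rfl⟩ := hw; exact hz i
      | zero => simp
      | add u v _ _ hu hv => rw [inner_add_right, hu, hv]; ring
      | smul c u _ hu => rw [real_inner_smul_right, hu]; ring
    have := h2 z (by rw [b.span_eq]; trivial)
    exact inner_self_eq_zero.mp this
  have hrep : ∀ x : E, x = ∑ i, (inner ℝ x (b i) : ℝ) • d i := by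
    intro x
    have h0 : ∀ j, (inner ℝ (x - ∑ i, (inner ℝ x (b i) : ℝ) • d i) (b j) : ℝ) = 0 := by
      intro j
      rw [inner_sub_left, sum_inner]
      simp [real_inner_smul_left, hdb, Finset.sum_ite_eq]
    have := hinj _ h0
    rw [sub_eq_zero] at this
    exact this
  set C : ℝ := ∑ i, ‖d i‖ with hC
  have hC0 : 0 ≤ C := Finset.sum_nonneg fun i _ => norm_nonneg _
  set M : ℝ := ∑ i, ‖b i‖ with hM
  have hM0 : 0 ≤ M := Finset.sum_nonneg fun i _ => norm_nonneg _
  set δ : ℝ := ε / (2 * (C + 1)) with hδdef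
  have hδ : 0 < δ := by positivity
  set ε' : ℝ := δ / (M + 1) with hε'def
  have hε' : 0 < ε' := by positivity
  refine ⟨δ, hδ, ε', hε', ?_, ?_⟩
  · -- first inclusion
    intro x hx
    simp only [Set.mem_iUnion] at hx
    obtain ⟨y, hy, hxy⟩ := hx
    intro g hg
    obtain ⟨i, rfl⟩ := hg
    have hbiΛ : b i ∈ (Λ : Set E) := by
      rw [hb]; exact AddSubgroup.subset_closure ⟨i, rfl⟩
    obtain ⟨k, hk⟩ := hy (b i) hbiΛ
    refine ⟨k, ?_⟩
    have : (inner ℝ x (b i) : ℝ) - k = inner ℝ (x - y) (b i) := by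
      rw [inner_sub_left, hk]
    rw [this]
    have h1 : |(inner ℝ (x - y) (b i) : ℝ)| ≤ ‖x - y‖ * ‖b i‖ := abs_real_inner_le_norm _ _
    have h2 : ‖x - y‖ ≤ ε' := by
      have := Metric.mem_ball.mp hxy
      rw [dist_eq_norm] at this
      linarith
    have h3 : ‖b i‖ ≤ M + 1 := by
      have : ‖b i‖ ≤ M := Finset.single_le_sum (fun j _ => norm_nonneg (b j)) (Finset.mem_univ i)
      linarith
    calc |(inner ℝ (x - y) (b i) : ℝ)| ≤ ‖x - y‖ * ‖b i‖ := h1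
      _ ≤ ε' * (M + 1) := by
          apply mul_le_mul h2 h3 (norm_nonneg _) (le_of_lt hε')
      _ = δ := by rw [hε'def, div_mul_cancel₀ _ (by linarith : M + 1 ≠ 0)]
  · -- second inclusion
    intro x hx
    choose k hk using fun i => hx (b i) ⟨i, rfl⟩
    set y : E := ∑ i, (k i : ℝ) • d i with hy
    have hyb : ∀ j, (inner ℝ y (b j) : ℝ) = (k j : ℝ) := by
      intro j
      rw [hy, sum_inner]
      simp [real_inner_smul_left, hdb, Finset.sum_ite_eq]
    have hydual : y ∈ dualSet (Λ : Set E) := by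
      intro g hg
      rw [hb] at hg
      induction hg using AddSubgroup.closure_induction with
      | mem g hg => obtain ⟨j, rfl⟩ := hg; exact ⟨k j, hyb j⟩
      | zero => exact ⟨0, by simp⟩
      | add u v _ _ hu hv =>
          obtain ⟨a, ha⟩ := hu; obtain ⟨c, hc⟩ := hv
          exact ⟨a + c, by rw [inner_add_right, ha, hc]; push_cast; ring⟩
      | neg u _ hu =>
          obtain ⟨a, ha⟩ := hu
          exact ⟨-a, by rw [inner_neg_right, ha]; push_cast; ring⟩
    have hxy : ‖x - y‖ ≤ δ * C := by
      have hxrep := hrep x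
      have : x - y = ∑ i, ((inner ℝ x (b i) : ℝ) - (k i : ℝ)) • d i := by
        conv_lhs => rw [hxrep, hy]
        rw [← Finset.sum_sub_distrib]
        congr 1; ext i; rw [sub_smul]
      rw [this]
      calc ‖∑ i, ((inner ℝ x (b i) : ℝ) - (k i : ℝ)) • d i‖
          ≤ ∑ i, ‖((inner ℝ x (b i) : ℝ) - (k i : ℝ)) • d i‖ := norm_sum_le _ _
        _ ≤ ∑ i, δ * ‖d i‖ := by
            apply Finset.sum_le_sum
            intro i _
            rw [norm_smul, Real.norm_eq_abs]
            exact mul_le_mul_of_nonneg_right (hk i) (norm_nonneg _)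
        _ = δ * C := by rw [hC, Finset.mul_sum]
    simp only [Set.mem_iUnion]
    refine ⟨y, hydual, ?_⟩
    rw [Metric.mem_ball, dist_eq_norm]
    have : δ * C < ε := by
      have h1 : δ * C ≤ δ * (C + 1) := by nlinarith
      have h2 : δ * (C + 1) = ε / 2 := by
        rw [hδdef]; field_simp
      linarith
    linarith
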